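/- Let u(n) = ∏_{j=0}^{n-1}(b+jc) / ∏_{j=0}^{n-1}(a+jc) for real (or rational) parameters a, b, c with all a+jc ≠ 0. Then det((u(i+j))_{i,j=0}^{n-1}) = ∏_{k=1}^{n-1} [ k! · c^k · ∏_{j=0}^{k-1}(b+jc)(a-b+jc) ] / [ ∏_{j=0}^{k-1}(a+(j+k-1)c) · ∏_{j=0}^{2k-1}(a+jc) ]. -/

import Mathlib

open Finset Matrix

namespace Stmt14

def P (a c : ℚ) (m : ℕ) : ℚ := ∏ t ∈ Finset.range m, (a + t * c)

noncomputable def F (a b c : ℚ) (k : ℕ) : ℚ :=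
  ((k.factorial : ℚ) * c ^ k * ∏ j ∈ Finset.range k, ((b + j * c) * (a - b + j * c))) /
    ((∏ j ∈ Finset.range k, (a + (j + k - 1 : ℕ) * c)) * ∏ j ∈ Finset.range (2 * k), (a + j * c))

lemma P_ne (a c : ℚ) (h : ∀ j : ℕ, a + j * c ≠ 0) (m : ℕ) : P a c m ≠ 0 :=
  Finset.prod_ne_zero_iff.mpr fun t _ => h t

lemma P_succ (a c : ℚ) (m : ℕ) : P a c (m + 1) = P a c m * (a + (m : ℚ) * c) := by
  rw [P, P, Finset.prod_range_succ]

lemma P_shift (x c : ℚ) (m : ℕ) : P x c (m + 1) = x * P (x + c) c m := by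
  rw [P, Finset.prod_range_succ']
  simp only [Nat.cast_zero, zero_mul, add_zero]
  rw [mul_comm]
  congr 1
  exact Finset.prod_congr rfl fun t _ => by push_cast; ring

lemma P_shift2 (x c : ℚ) (m : ℕ) : P x c (m + 2) = x * (x + c) * P (x + 2 * c) c m := by
  rw [P_shift, P_shift]
  have : x + c + c = x + 2 * c := by ring
  rw [this, mul_assoc]

lemma ratio (a b c : ℚ) (h : ∀ j : ℕ, a + j * c ≠ 0) (m : ℕ) :
    P b c (m + 1) / P a c (m + 1) - (b + m * c) / (a + m * c) * (P b c m / P a c m) = 0 := by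
  rw [P_succ, P_succ]
  have h1 : P a c m ≠ 0 := P_ne a c h m
  have h2 : a + (m : ℚ) * c ≠ 0 := h m
  field_simp
  ring

lemma entry (a b c : ℚ) (h : ∀ j : ℕ, a + j * c ≠ 0) (i j : ℕ) :
    P b c (i + j + 2) / P a c (i + j + 2)
      - (b + j * c) / (a + j * c) * (P b c (i + j + 1) / P a c (i + j + 1))
    = ((i : ℚ) + 1) * c * (a - b) *
        ((a + (j : ℚ) * c)⁻¹ *
          (b / (a * (a + c)) * (P (b + c) c (i + j) / P (a + 2 * c) c (i + j)))) := by
  set s := i + j with hs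
  have ha : a ≠ 0 := by have := h 0; simpa using this
  have hac : a + c ≠ 0 := by have := h 1; push_cast at this; simpa using this
  have hj : a + (j : ℚ) * c ≠ 0 := h j
  have hs1 : a + ((s : ℚ) + 1) * c ≠ 0 := by
    have := h (s + 1); push_cast at this; exact this
  have hQ : P (a + 2 * c) c s ≠ 0 := by
    refine Finset.prod_ne_zero_iff.mpr fun t _ => ?_
    have := h (t + 2); push_cast at this
    intro hx; exact this (by linear_combination hx)
  have hA1 : P a c (s + 1) ≠ 0 := P_ne a c h (s + 1)
  have e1 : P b c (s + 1) = b * P (b + c) c s := P_shift b c s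
  have e2 : P b c (s + 2) = b * P (b + c) c s * (b + ((s : ℚ) + 1) * c) := by
    rw [P_succ, e1]; push_cast; ring
  have e3 : P a c (s + 2) = P a c (s + 1) * (a + ((s : ℚ) + 1) * c) := by
    rw [P_succ]; push_cast; ring
  have e4 : P a c (s + 2) = a * (a + c) * P (a + 2 * c) c s := P_shift2 a c s
  have eA : P a c (s + 1) = a * (a + c) * P (a + 2 * c) c s / (a + ((s : ℚ) + 1) * c) := by
    rw [eq_div_iff hs1, ← e3, e4]
  have hij : (i : ℚ) + 1 = ((s : ℚ) + 1) - j := by rw [hs]; push_cast; ring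
  rw [e2, e3, e1, eA, hij]
  field_simp
  have hj' : a + c * (j : ℚ) ≠ 0 := by rwa [mul_comm]
  have hs1' : a + c * ((s : ℚ) + 1) ≠ 0 := by rwa [mul_comm]
  have hQ' : P (a + c * 2) c s ≠ 0 := by rwa [mul_comm]
  field_simp
  ring

lemma Fstep (a b c : ℚ) (h : ∀ j : ℕ, a + j * c ≠ 0) (k : ℕ) :
    F a b c (k + 2)
      = ((k : ℚ) + 2) * c * (a - b) *
          ((a + ((k : ℚ) + 1) * c)⁻¹ * (b / (a * (a + c)) * F (a + 2 * c) (b + c) c (k + 1))) := by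
  have ha : a ≠ 0 := by have := h 0; simpa using this
  have hac : a + c ≠ 0 := by have := h 1; push_cast at this; simpa using this
  have hk1 : a + ((k : ℚ) + 1) * c ≠ 0 := by have := h (k + 1); push_cast at this; exact this
  -- numerator product
  have eN : ∏ j ∈ Finset.range (k + 2), ((b + j * c) * (a - b + j * c))
      = (b * (a - b)) *
          ∏ j ∈ Finset.range (k + 1), (((b + c) + j * c) * ((a + 2 * c) - (b + c) + j * c)) := by
    rw [Finset.prod_range_succ']
    simp only [Nat.cast_zero, zero_mul, add_zero]
    rw [mul_comm]
    congr 1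
    exact Finset.prod_congr rfl fun t _ => by push_cast; ring
  -- first denominator
  have e0 : ∀ j : ℕ, ((j + (k + 2) - 1 : ℕ) : ℚ) = (j : ℚ) + k + 1 := by
    intro j
    have hj : j + (k + 2) - 1 = j + k + 1 := by omega
    rw [hj]; push_cast; ring
  have e1 : ∀ j : ℕ, ((j + (k + 1) - 1 : ℕ) : ℚ) = (j : ℚ) + k := by
    intro j
    have hj : j + (k + 1) - 1 = j + k := by omega
    rw [hj]; push_cast; ring
  have eD1 : ∏ j ∈ Finset.range (k + 2), (a + ((j + (k + 2) - 1 : ℕ) : ℚ) * c)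
      = (a + ((k : ℚ) + 1) * c) *
          ∏ j ∈ Finset.range (k + 1), ((a + 2 * c) + ((j + (k + 1) - 1 : ℕ) : ℚ) * c) := by
    calc ∏ j ∈ Finset.range (k + 2), (a + ((j + (k + 2) - 1 : ℕ) : ℚ) * c)
        = ∏ j ∈ Finset.range (k + 2), (a + ((j : ℚ) + k + 1) * c) :=
          Finset.prod_congr rfl fun j _ => by rw [e0 j]
      _ = (∏ x ∈ Finset.range (k + 1), (a + (((x + 1 : ℕ) : ℚ) + k + 1) * c))
            * (a + (((0 : ℕ) : ℚ) + k + 1) * c) := Finset.prod_range_succ' _ _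
      _ = (a + ((k : ℚ) + 1) * c) *
            ∏ j ∈ Finset.range (k + 1), ((a + 2 * c) + ((j + (k + 1) - 1 : ℕ) : ℚ) * c) := by
          rw [mul_comm]
          congr 1
          · push_cast; ring
          · exact Finset.prod_congr rfl fun t _ => by rw [e1 t]; push_cast; ring
  -- second denominator
  have eD2 : ∏ j ∈ Finset.range (2 * (k + 2)), (a + j * c)
      = a * (a + c) * ∏ j ∈ Finset.range (2 * (k + 1)), ((a + 2 * c) + j * c) := by
    have h2 : 2 * (k + 2) = (2 * (k + 1)) + 1 + 1 := by ring
    rw [h2, Finset.prod_range_succ', Finset.prod_range_succ']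
    have h3 : ∏ x ∈ Finset.range (2 * (k + 1)), (a + ((x + 1 + 1 : ℕ) : ℚ) * c)
        = ∏ j ∈ Finset.range (2 * (k + 1)), ((a + 2 * c) + j * c) :=
      Finset.prod_congr rfl fun t _ => by push_cast; ring
    rw [h3]
    push_cast
    ring
  -- nonvanishing
  have hq : (∏ j ∈ Finset.range (k + 1), ((a + 2 * c) + ((j + (k + 1) - 1 : ℕ) : ℚ) * c)) ≠ 0 := by
    refine Finset.prod_ne_zero_iff.mpr fun t _ => ?_
    rw [e1 t]
    have := h (t + k + 2); push_cast at this
    intro hx; exact this (by linear_combination hx)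
  have hr : (∏ j ∈ Finset.range (2 * (k + 1)), ((a + 2 * c) + j * c)) ≠ 0 := by
    refine Finset.prod_ne_zero_iff.mpr fun t _ => ?_
    have := h (t + 2); push_cast at this
    intro hx; exact this (by linear_combination hx)
  rw [F, F, eN, eD1, eD2]
  have hfac : ((k + 2).factorial : ℚ) = ((k : ℚ) + 2) * ((k + 1).factorial : ℚ) := by
    rw [show k + 2 = (k + 1) + 1 from rfl, Nat.factorial_succ]
    push_cast; ring
  rw [hfac]
  set p := ∏ j ∈ Finset.range (k + 1), (((b + c) + j * c) * ((a + 2 * c) - (b + c) + j * c)) with hp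
  set q := ∏ j ∈ Finset.range (k + 1), ((a + 2 * c) + ((j + (k + 1) - 1 : ℕ) : ℚ) * c) with hqq
  set r := ∏ j ∈ Finset.range (2 * (k + 1)), ((a + 2 * c) + j * c) with hrr
  rw [pow_succ]
  field_simp

lemma Fone (a b c : ℚ) (h : ∀ j : ℕ, a + j * c ≠ 0) :
    F a b c 1 = c * (a - b) * (a⁻¹ * (b / (a * (a + c)))) := by
  have ha : a ≠ 0 := by have := h 0; simpa using this
  have hac : a + c ≠ 0 := by have := h 1; push_cast at this; simpa using this
  rw [F]
  norm_num [Finset.prod_range_succ]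
  field_simp

lemma alg (a b c : ℚ) (h : ∀ j : ℕ, a + j * c ≠ 0) :
    ∀ n : ℕ, ∏ k ∈ Finset.Icc 1 n, F a b c k
      = (∏ i ∈ Finset.range n, (((i : ℚ) + 1) * c * (a - b))) *
          ((∏ j ∈ Finset.range n, (a + (j : ℚ) * c)⁻¹) *
            ((b / (a * (a + c))) ^ n * ∏ k ∈ Finset.Icc 1 (n - 1), F (a + 2 * c) (b + c) c k)) := by
  intro n
  induction n with
  | zero => simp
  | succ n ih =>
    match n, ih with
    | 0, _ =>
      rw [show Finset.Icc 1 1 = {1} from rfl]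
      simp only [Finset.prod_singleton, Finset.prod_range_one, pow_one]
      rw [Fone a b c h]
      norm_num
    | (m + 1), ih =>
      rw [Finset.prod_range_succ (fun i : ℕ => ((i : ℚ) + 1) * c * (a - b)) (m + 1),
        Finset.prod_range_succ (fun j : ℕ => (a + (j : ℚ) * c)⁻¹) (m + 1),
        show m + 2 - 1 = m + 1 from rfl,
        Finset.prod_Icc_succ_top (by omega : 1 ≤ m + 1) (f := F (a + 2 * c) (b + c) c),
        Finset.prod_Icc_succ_top (by omega : 1 ≤ m + 2) (f := F a b c), ih,
        show m + 1 - 1 = m from rfl, pow_succ, Fstep a b c h m]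
      push_cast
      ring

lemma detstep (a b c : ℚ) (h : ∀ j : ℕ, a + j * c ≠ 0) (n : ℕ) :
    Matrix.det (Matrix.of fun i j : Fin (n + 1) => P b c (i.1 + j.1) / P a c (i.1 + j.1))
      = (∏ i : Fin n, (((i : ℕ) : ℚ) + 1) * c * (a - b)) *
          ((∏ j : Fin n, (a + ((j : ℕ) : ℚ) * c)⁻¹) *
            ((b / (a * (a + c))) ^ n *
              Matrix.det (Matrix.of fun i j : Fin n =>
                P (b + c) c (i.1 + j.1) / P (a + 2 * c) c (i.1 + j.1)))) := by
  set u : ℕ → ℚ := fun m => P b c m / P a c m with hu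
  set B : Matrix (Fin (n + 1)) (Fin (n + 1)) ℚ := Matrix.of fun i j =>
    Fin.cases (u i.1)
      (fun j' : Fin n => u (i.1 + j'.1 + 1) - (b + j'.1 * c) / (a + j'.1 * c) * u (i.1 + j'.1)) j
    with hB
  have hd1 : Matrix.det (Matrix.of fun i j : Fin (n + 1) => P b c (i.1 + j.1) / P a c (i.1 + j.1))
      = Matrix.det B := by
    apply Matrix.det_eq_of_forall_col_eq_smul_add_pred
      (fun j : Fin n => (b + j.1 * c) / (a + j.1 * c))
    · intro i
      simp [hB, hu]
    · intro i j
      simp only [hB, Matrix.of_apply, Fin.cases_succ, Fin.val_succ, Fin.coe_castSucc, hu]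
      ring_nf
  have hrow0 : ∀ j : Fin (n + 1), j ≠ 0 → B 0 j = 0 := by
    intro j hj
    obtain ⟨j', rfl⟩ := Fin.eq_succ_of_ne_zero hj
    simp only [hB, Matrix.of_apply, Fin.cases_succ, Fin.val_zero, Nat.zero_add, hu]
    exact ratio a b c h j'.1
  have hd2 : Matrix.det B = Matrix.det (B.submatrix Fin.succ Fin.succ) := by
    rw [Matrix.det_succ_row_zero B]
    rw [Fintype.sum_eq_single (0 : Fin (n + 1))]
    · have hB00 : B 0 0 = 1 := by simp [hB, hu, P]
      rw [hB00, Fin.succAbove_zero]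
      norm_num
    · intro j hj
      rw [hrow0 j hj]
      ring
  rw [hd1, hd2]
  have hsub : B.submatrix Fin.succ Fin.succ
      = Matrix.of (fun i j : Fin n => (((i : ℕ) : ℚ) + 1) * c * (a - b) *
          (Matrix.of (fun i j : Fin n => (a + ((j : ℕ) : ℚ) * c)⁻¹ *
            (Matrix.of (fun i j : Fin n => (b / (a * (a + c))) *
              (Matrix.of (fun i j : Fin n =>
                P (b + c) c (i.1 + j.1) / P (a + 2 * c) c (i.1 + j.1)) i j)) i j)) i j)) := by
    ext i j
    simp only [Matrix.submatrix_apply, hB, Matrix.of_apply, Fin.cases_succ, Fin.val_succ, hu]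
    have e1 : i.1 + 1 + j.1 + 1 = i.1 + j.1 + 2 := by omega
    have e2 : i.1 + 1 + j.1 = i.1 + j.1 + 1 := by omega
    rw [e1, e2]
    exact entry a b c h i.1 j.1
  rw [hsub, Matrix.det_mul_column, Matrix.det_mul_row,
    Matrix.det_mul_row (fun _ : Fin n => b / (a * (a + c)))]
  simp only [Finset.prod_const, Finset.card_univ, Fintype.card_fin]

lemma key (n : ℕ) : ∀ (a b c : ℚ), (∀ j : ℕ, a + j * c ≠ 0) →
    Matrix.det (Matrix.of fun i j : Fin n => P b c (i.1 + j.1) / P a c (i.1 + j.1))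
      = ∏ k ∈ Finset.Icc 1 (n - 1), F a b c k := by
  induction n with
  | zero =>
    intro a b c h
    rw [Matrix.det_fin_zero, show (0 : ℕ) - 1 = 0 from rfl,
      Finset.Icc_eq_empty (by omega), Finset.prod_empty]
  | succ n ih =>
    intro a b c h
    have h' : ∀ j : ℕ, (a + 2 * c) + (j : ℚ) * c ≠ 0 := by
      intro j
      have := h (j + 2); push_cast at this
      intro hx; exact this (by linear_combination hx)
    rw [detstep a b c h n, ih (a + 2 * c) (b + c) c h',
      show n + 1 - 1 = n from rfl, alg a b c h n,
      Fin.prod_univ_eq_prod_range (fun i : ℕ => ((i : ℚ) + 1) * c * (a - b)),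
      Fin.prod_univ_eq_prod_range (fun j : ℕ => (a + (j : ℚ) * c)⁻¹)]

end Stmt14

theorem stmt_14 (a b c : ℚ) (h : ∀ j : ℕ, a + j * c ≠ 0)
    (u : ℕ → ℚ)
    (hu : ∀ n : ℕ, u n = (∏ j ∈ Finset.range n, (b + j * c)) /
        (∏ j ∈ Finset.range n, (a + j * c)))
    (n : ℕ) :
    Matrix.det (Matrix.of (fun i j : Fin n => u (i.1 + j.1)))
      = ∏ k ∈ Finset.Icc 1 (n - 1),
          ((k.factorial : ℚ) * c ^ k *
              ∏ j ∈ Finset.range k, ((b + j * c) * (a - b + j * c))) /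
            ((∏ j ∈ Finset.range k, (a + (j + k - 1 : ℕ) * c)) *
              ∏ j ∈ Finset.range (2 * k), (a + j * c)) := by
  have hM : (Matrix.of (fun i j : Fin n => u (i.1 + j.1)))
      = Matrix.of fun i j : Fin n => Stmt14.P b c (i.1 + j.1) / Stmt14.P a c (i.1 + j.1) := by
    ext i j
    simp only [Matrix.of_apply, hu, Stmt14.P]
  rw [hM, Stmt14.key n a b c h]
  exact Finset.prod_congr rfl fun k _ => rfl
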